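/- Let A and B be real symmetric positive semidefinite n×n matrices. Then every complex root of the characteristic polynomial of the product A·B is a nonnegative real number. -/

import Mathlib

open Matrix BigOperators ComplexOrder

section Aux

variable {n : ℕ}

private lemma psd_map_complex {A : Matrix (Fin n) (Fin n) ℝ} (hA : A.PosSemidef) :
    (A.map (algebraMap ℝ ℂ)).PosSemidef := by
  obtain ⟨L, rfl⟩ : ∃ L : Matrix (Fin n) (Fin n) ℝ, A = Lᴴ * L := by
    open scoped MatrixOrder in
    exact CStarAlgebra.nonneg_iff_eq_star_mul_self.mp (Matrix.nonneg_iff_posSemidef.mpr hA)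
  have hmap : (Lᴴ * L).map (algebraMap ℝ ℂ) = (L.map (algebraMap ℝ ℂ))ᴴ * L.map (algebraMap ℝ ℂ) := by
    rw [Matrix.map_mul]
    congr 1
    rw [Matrix.conjTranspose_map]
    intro a
    simp [Complex.conj_ofReal]
  rw [hmap]
  exact Matrix.posSemidef_conjTranspose_mul_self _

private lemma real_psd {A : Matrix (Fin n) (Fin n) ℝ} (hAsymm : A.IsSymm)
    (hApsd : ∀ x : Fin n → ℝ, 0 ≤ x ⬝ᵥ A.mulVec x) : A.PosSemidef := by
  refine Matrix.PosSemidef.of_dotProduct_mulVec_nonneg ?_ ?_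
  · ext i j
    simp [Matrix.conjTranspose_apply, hAsymm.apply]
  · intro x
    simpa using hApsd x

end Aux

theorem product_psd_real_nonneg_spectrum {n : ℕ} (A B : Matrix (Fin n) (Fin n) ℝ)
    (hAsymm : A.IsSymm) (hBsymm : B.IsSymm)
    (hApsd : ∀ x : Fin n → ℝ, 0 ≤ x ⬝ᵥ A.mulVec x)
    (hBpsd : ∀ x : Fin n → ℝ, 0 ≤ x ⬝ᵥ B.mulVec x) :
    ∀ z : ℂ, ((A * B).charpoly.map (algebraMap ℝ ℂ)).IsRoot z →
      z.im = 0 ∧ 0 ≤ z.re := by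
  intro z hz
  set f := algebraMap ℝ ℂ
  set A' := A.map f with hA'
  set B' := B.map f with hB'
  have hA'psd : A'.PosSemidef := psd_map_complex (real_psd hAsymm hApsd)
  have hB'psd : B'.PosSemidef := psd_map_complex (real_psd hBsymm hBpsd)
  -- translate root to determinant condition
  have hmapmul : (A * B).map f = A' * B' := Matrix.map_mul
  have hroot : ((A' * B').charpoly).IsRoot z := by
    rw [← hmapmul, Matrix.charpoly_map]; exact hz
  have hdet : (Matrix.scalar (Fin n) z - A' * B').det = 0 := by
    have := hroot
    rw [Polynomial.IsRoot, Matrix.charpoly, eval_det,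
      Matrix.matPolyEquiv_charmatrix] at this
    simpa using this
  obtain ⟨v, hv0, hv⟩ := (Matrix.exists_mulVec_eq_zero_iff).mpr hdet
  have hev : (A' * B') *ᵥ v = z • v := by
    have : Matrix.scalar (Fin n) z *ᵥ v - (A' * B') *ᵥ v = 0 := by
      rw [← Matrix.sub_mulVec, hv]
    have h2 : Matrix.scalar (Fin n) z *ᵥ v = (A' * B') *ᵥ v := by
      linear_combination (norm := module) this
    rw [← h2]
    ext i
    simp [Matrix.scalar, Matrix.mulVec_diagonal, Pi.algebraMap_apply]
  set u := B' *ᵥ v with hu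
  set t := star v ⬝ᵥ B' *ᵥ v with ht
  set s := star u ⬝ᵥ A' *ᵥ u with hs
  have ht0 : 0 ≤ t := hB'psd.dotProduct_mulVec_nonneg v
  have hs0 : 0 ≤ s := hA'psd.dotProduct_mulVec_nonneg u
  have hst : s = z * t := by
    have h1 : A' *ᵥ u = z • v := by
      rw [hu, Matrix.mulVec_mulVec] at *
      exact hev
    have h2 : star u ⬝ᵥ v = t := by
      rw [hu, Matrix.star_mulVec, ← Matrix.dotProduct_mulVec, hB'psd.isHermitian.eq,
        Matrix.dotProduct_mulVec, ht, Matrix.dotProduct_mulVec]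
    rw [hs, h1, dotProduct_smul, smul_eq_mul, h2]
  rcases eq_or_ne t 0 with htz | htz
  · have hBv : B' *ᵥ v = 0 := (hB'psd.dotProduct_mulVec_zero_iff v).mp (by rw [← ht, htz])
    have : z • v = 0 := by
      rw [← hev, ← Matrix.mulVec_mulVec, hBv, Matrix.mulVec_zero]
    rcases smul_eq_zero.mp this with hz0 | hv0'
    · simp [hz0]
    · exact absurd hv0' hv0
  · have htre : 0 < t.re := by
      rcases (Complex.le_def.mp ht0) with ⟨hre, him⟩
      rcases lt_or_eq_of_le hre with h | h
      · simpa using h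
      · exfalso; apply htz; apply Complex.ext <;> simp [← h, ← him]
    have him : t.im = 0 := by simpa using (Complex.le_def.mp ht0).2.symm
    have hsim : s.im = 0 := by simpa using (Complex.le_def.mp hs0).2.symm
    have hsre : 0 ≤ s.re := by simpa using (Complex.le_def.mp hs0).1
    have hre_eq : s.re = z.re * t.re := by
      rw [hst]; simp [Complex.mul_re, him]
    have him_eq : 0 = z.im * t.re := by
      rw [hst] at hsim
      simpa [Complex.mul_im, him] using hsim.symm
    constructor
    · rcases mul_eq_zero.mp him_eq.symm with h | h
      · exact h
      · exact absurd h (ne_of_gt htre)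
    · nlinarith [hre_eq, hsre, htre]
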